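/- For B(x) = T_1(x) − T_4(x) and the dynamics X ↦ T_2(X), the expected squared error is σ(N) = 2/N² for N ≥ 2, while for the dynamics X ↦ T_4(X) it is σ(N) = 1/N², where σ(N) = (1/N)(⟨B²⟩−⟨B⟩²) + (2/N²)Σ_{l=1}^{N}(N−l)(⟨B·(B∘T_{q^l})⟩−⟨B⟩²) with q ∈ {2,4}. -/

import Mathlib

open Polynomial Polynomial.Chebyshev MeasureTheory Finset


lemma cos_image_Ioo' : Real.cos '' (Set.Ioo 0 Real.pi) = Set.Ioo (-1:ℝ) 1 := by
  ext y
  constructor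
  · rintro ⟨θ, ⟨h0, hπ⟩, rfl⟩
    constructor
    · have := Real.strictAntiOn_cos ⟨h0.le, hπ.le⟩ ⟨Real.pi_pos.le, le_refl _⟩ hπ
      simpa [Real.cos_pi] using this
    · have := Real.strictAntiOn_cos ⟨le_refl _, Real.pi_pos.le⟩ ⟨h0.le, hπ.le⟩ h0
      simpa [Real.cos_zero] using this
  · rintro ⟨hy1, hy2⟩
    refine ⟨Real.arccos y, ⟨Real.arccos_pos.2 hy2, ?_⟩, Real.cos_arccos hy1.le hy2.le⟩
    refine lt_of_le_of_ne (Real.arccos_le_pi y) (fun h => ?_)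
    have := Real.cos_arccos hy1.le hy2.le
    rw [h, Real.cos_pi] at this
    linarith

lemma weight_subst (g : ℝ → ℝ) :
    ∫ x in Set.Icc (-1:ℝ) 1, g x * (1 / (Real.pi * Real.sqrt (1 - x ^ 2)))
      = ∫ θ in (0:ℝ)..Real.pi, g (Real.cos θ) / Real.pi := by
  rw [MeasureTheory.integral_Icc_eq_integral_Ioo, ← cos_image_Ioo',
    integral_image_eq_integral_abs_deriv_smul (f' := fun θ => -Real.sin θ) measurableSet_Ioo
      (fun θ _ => (Real.hasDerivAt_cos θ).hasDerivWithinAt)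
      (Real.injOn_cos.mono Set.Ioo_subset_Icc_self),
    intervalIntegral.integral_of_le Real.pi_pos.le, MeasureTheory.integral_Ioc_eq_integral_Ioo]
  refine MeasureTheory.setIntegral_congr_fun measurableSet_Ioo (fun θ hθ => ?_)
  have hs : 0 < Real.sin θ := Real.sin_pos_of_pos_of_lt_pi hθ.1 hθ.2
  have h1 : Real.sqrt (1 - Real.cos θ ^ 2) = Real.sin θ := by
    rw [show (1 : ℝ) - Real.cos θ ^ 2 = Real.sin θ ^ 2 by
      have := Real.sin_sq_add_cos_sq θ; linarith, Real.sqrt_sq hs.le]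
  simp only [smul_eq_mul, h1, abs_neg, abs_of_pos hs]
  field_simp

lemma Jcos (k : ℤ) : ∫ θ in (0:ℝ)..Real.pi, Real.cos (k * θ) = if k = 0 then Real.pi else 0 := by
  rcases eq_or_ne k 0 with rfl | hk
  · simp
  · have hk' : (k:ℝ) ≠ 0 := Int.cast_ne_zero.2 hk
    rw [if_neg hk, _root_.intervalIntegral.integral_comp_mul_left (f := fun x => Real.cos x) hk']
    simp [Real.sin_int_mul_pi]

lemma Jab (a b : ℤ) (c d : ℝ) (hc : c = a) (hd : d = b) :
    ∫ θ in (0:ℝ)..Real.pi, Real.cos (c*θ + d*θ) = if a + b = 0 then Real.pi else 0 := by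
  subst hc hd
  have h : ∀ θ : ℝ, (a:ℝ)*θ + (b:ℝ)*θ = ((a+b : ℤ):ℝ)*θ := fun θ => by push_cast; ring
  simp only [h]
  exact Jcos (a+b)

lemma Jsb (a b : ℤ) (c d : ℝ) (hc : c = a) (hd : d = b) :
    ∫ θ in (0:ℝ)..Real.pi, Real.cos (c*θ - d*θ) = if a - b = 0 then Real.pi else 0 := by
  subst hc hd
  have h : ∀ θ : ℝ, (a:ℝ)*θ - (b:ℝ)*θ = ((a-b : ℤ):ℝ)*θ := fun θ => by push_cast; ring
  simp only [h]
  exact Jcos (a-b)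

lemma iInt (f : ℝ → ℝ) (hf : Continuous f) : IntervalIntegrable f volume 0 Real.pi :=
  hf.intervalIntegrable 0 Real.pi

lemma meanB (B : ℝ → ℝ) (hB : ∀ x, B x = (T ℝ 1).eval x - (T ℝ 4).eval x) :
    ∫ x in Set.Icc (-1:ℝ) 1, B x * (1 / (Real.pi * Real.sqrt (1 - x ^ 2))) = 0 := by
  rw [weight_subst B]
  simp only [hB, T_real_cos]
  rw [_root_.intervalIntegral.integral_div,
    _root_.intervalIntegral.integral_sub (iInt _ (by fun_prop)) (iInt _ (by fun_prop)),
    Jcos, Jcos]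
  norm_num

lemma sqB (B : ℝ → ℝ) (hB : ∀ x, B x = (T ℝ 1).eval x - (T ℝ 4).eval x) :
    ∫ x in Set.Icc (-1:ℝ) 1, B x ^ 2 * (1 / (Real.pi * Real.sqrt (1 - x ^ 2))) = 1 := by
  rw [weight_subst (fun x => B x ^ 2)]
  simp only [hB, T_real_cos]
  have hA := iInt (fun θ:ℝ => Real.cos ((1:ℝ)*θ + 1*θ)) (by fun_prop)
  have hBi := iInt (fun θ:ℝ => Real.cos ((1:ℝ)*θ - 1*θ)) (by fun_prop)
  have hC := iInt (fun θ:ℝ => 2*Real.cos ((4:ℝ)*θ + 1*θ)) (by fun_prop)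
  have hD := iInt (fun θ:ℝ => 2*Real.cos ((4:ℝ)*θ - 1*θ)) (by fun_prop)
  have hE := iInt (fun θ:ℝ => Real.cos ((4:ℝ)*θ + 4*θ)) (by fun_prop)
  have hF := iInt (fun θ:ℝ => Real.cos ((4:ℝ)*θ - 4*θ)) (by fun_prop)
  rw [_root_.intervalIntegral.integral_congr (g := fun θ => (Real.cos ((1:ℝ)*θ + 1*θ)
      + Real.cos ((1:ℝ)*θ - 1*θ) - 2*Real.cos ((4:ℝ)*θ + 1*θ) - 2*Real.cos ((4:ℝ)*θ - 1*θ)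
      + Real.cos ((4:ℝ)*θ + 4*θ) + Real.cos ((4:ℝ)*θ - 4*θ)) / (2*Real.pi))
      (fun θ _ => by push_cast; simp only [Real.cos_add, Real.cos_sub, one_mul]; ring),
    _root_.intervalIntegral.integral_div,
    _root_.intervalIntegral.integral_add ((((hA.add hBi).sub hC).sub hD).add hE) hF,
    _root_.intervalIntegral.integral_add (((hA.add hBi).sub hC).sub hD) hE,
    _root_.intervalIntegral.integral_sub ((hA.add hBi).sub hC) hD,
    _root_.intervalIntegral.integral_sub (hA.add hBi) hC,
    _root_.intervalIntegral.integral_add hA hBi,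
    _root_.intervalIntegral.integral_const_mul, _root_.intervalIntegral.integral_const_mul,
    Jab 1 1 1 1 (by norm_num) (by norm_num), Jsb 1 1 1 1 (by norm_num) (by norm_num),
    Jab 4 1 4 1 (by norm_num) (by norm_num), Jsb 4 1 4 1 (by norm_num) (by norm_num),
    Jab 4 4 4 4 (by norm_num) (by norm_num), Jsb 4 4 4 4 (by norm_num) (by norm_num)]
  norm_num [Real.pi_ne_zero]
  field_simp
  ring

lemma corrB (B : ℝ → ℝ) (hB : ∀ x, B x = (T ℝ 1).eval x - (T ℝ 4).eval x)
    (M : ℕ) (hM : 2 ≤ M) :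
    ∫ x in Set.Icc (-1:ℝ) 1, B x * B ((T ℝ (M:ℤ)).eval x) *
        (1 / (Real.pi * Real.sqrt (1 - x ^ 2)))
      = if M = 4 then -(1/2 : ℝ) else 0 := by
  rw [weight_subst (fun x => B x * B ((T ℝ (M:ℤ)).eval x))]
  simp only [hB, T_real_cos]
  set m : ℝ := (M:ℝ) with hm
  have hA := iInt (fun θ:ℝ => Real.cos (m*θ + 1*θ)) (by fun_prop)
  have hBi := iInt (fun θ:ℝ => Real.cos (m*θ - 1*θ)) (by fun_prop)
  have hC := iInt (fun θ:ℝ => Real.cos (4*m*θ + 1*θ)) (by fun_prop)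
  have hD := iInt (fun θ:ℝ => Real.cos (4*m*θ - 1*θ)) (by fun_prop)
  have hE := iInt (fun θ:ℝ => Real.cos (m*θ + 4*θ)) (by fun_prop)
  have hF := iInt (fun θ:ℝ => Real.cos (m*θ - 4*θ)) (by fun_prop)
  have hG := iInt (fun θ:ℝ => Real.cos (4*m*θ + 4*θ)) (by fun_prop)
  have hH := iInt (fun θ:ℝ => Real.cos (4*m*θ - 4*θ)) (by fun_prop)
  rw [_root_.intervalIntegral.integral_congr (g := fun θ => (Real.cos (m*θ + 1*θ)
      + Real.cos (m*θ - 1*θ) - Real.cos (4*m*θ + 1*θ) - Real.cos (4*m*θ - 1*θ)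
      - Real.cos (m*θ + 4*θ) - Real.cos (m*θ - 4*θ) + Real.cos (4*m*θ + 4*θ)
      + Real.cos (4*m*θ - 4*θ)) / (2*Real.pi))
      (fun θ _ => by push_cast; simp only [Real.cos_add, Real.cos_sub, one_mul, mul_assoc]; ring),
    _root_.intervalIntegral.integral_div,
    _root_.intervalIntegral.integral_add ((((((hA.add hBi).sub hC).sub hD).sub hE).sub hF).add hG) hH,
    _root_.intervalIntegral.integral_add (((((hA.add hBi).sub hC).sub hD).sub hE).sub hF) hG,
    _root_.intervalIntegral.integral_sub ((((hA.add hBi).sub hC).sub hD).sub hE) hF,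
    _root_.intervalIntegral.integral_sub (((hA.add hBi).sub hC).sub hD) hE,
    _root_.intervalIntegral.integral_sub ((hA.add hBi).sub hC) hD,
    _root_.intervalIntegral.integral_sub (hA.add hBi) hC,
    _root_.intervalIntegral.integral_add hA hBi,
    Jab M 1 m 1 (by push_cast; ring) (by norm_num),
    Jsb M 1 m 1 (by push_cast; ring) (by norm_num),
    Jab (4*M) 1 (4*m) 1 (by push_cast; ring) (by norm_num),
    Jsb (4*M) 1 (4*m) 1 (by push_cast; ring) (by norm_num),
    Jab M 4 m 4 (by push_cast; ring) (by norm_num),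
    Jsb M 4 m 4 (by push_cast; ring) (by norm_num),
    Jab (4*M) 4 (4*m) 4 (by push_cast; ring) (by norm_num),
    Jsb (4*M) 4 (4*m) 4 (by push_cast; ring) (by norm_num)]
  have h1 : (M:ℤ) + 1 ≠ 0 := by omega
  have h2 : (M:ℤ) - 1 ≠ 0 := by omega
  have h3 : 4*(M:ℤ) + 1 ≠ 0 := by omega
  have h4 : 4*(M:ℤ) - 1 ≠ 0 := by omega
  have h5 : (M:ℤ) + 4 ≠ 0 := by omega
  have h7 : 4*(M:ℤ) + 4 ≠ 0 := by omega
  have h8 : 4*(M:ℤ) - 4 ≠ 0 := by omega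
  rcases eq_or_ne M 4 with rfl | hne
  · norm_num
    field_simp
  · have h6 : (M:ℤ) - 4 ≠ 0 := by omega
    simp only [if_neg h1, if_neg h2, if_neg h3, if_neg h4, if_neg h5, if_neg h6, if_neg h7,
      if_neg h8, if_neg hne]
    norm_num

/-- for `B = T_1 − T_4`, the dynamics `T_2` gives `σ(N) = 2/N²`
while the dynamics `T_4` gives `σ(N) = 1/N²`, for `N ≥ 2`. -/
theorem chebyshev_superefficient_example_T1_minus_T4
    (B : ℝ → ℝ) (hB : ∀ x, B x = (T ℝ 1).eval x - (T ℝ 4).eval x)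
    (σ : ℕ → ℕ → ℝ)
    (hσ : ∀ q N : ℕ, σ q N =
      (1 / (N : ℝ)) *
        ((∫ x in Set.Icc (-1 : ℝ) 1, B x ^ 2 * (1 / (Real.pi * Real.sqrt (1 - x ^ 2))))
          - (∫ x in Set.Icc (-1 : ℝ) 1, B x * (1 / (Real.pi * Real.sqrt (1 - x ^ 2)))) ^ 2)
      + (2 / (N : ℝ) ^ 2) * ∑ l ∈ Icc 1 N, ((N : ℝ) - (l : ℝ)) *
          ((∫ x in Set.Icc (-1 : ℝ) 1,
              B x * B ((T ℝ (q ^ l : ℕ)).eval x) * (1 / (Real.pi * Real.sqrt (1 - x ^ 2))))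
            - (∫ x in Set.Icc (-1 : ℝ) 1, B x * (1 / (Real.pi * Real.sqrt (1 - x ^ 2)))) ^ 2))
    (N : ℕ) (hN : 2 ≤ N) :
    σ 2 N = 2 / (N : ℝ) ^ 2 ∧ σ 4 N = 1 / (N : ℝ) ^ 2 := by
  have hm := meanB B hB
  have hs2 := sqB B hB
  have hN0 : (N:ℝ) ≠ 0 := Nat.cast_ne_zero.2 (by omega)
  constructor
  · rw [hσ, hm, hs2,
      Finset.sum_eq_single_of_mem 2 (Finset.mem_Icc.2 (by omega)) (fun b hb hb2 => by
        have hb1 : 1 ≤ b := (Finset.mem_Icc.1 hb).1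
        rw [corrB B hB (2^b) (by calc (2:ℕ) = 2^1 := by norm_num
              _ ≤ 2^b := Nat.pow_le_pow_right (by norm_num) hb1),
          if_neg (fun h : 2^b = 4 => hb2 (Nat.pow_right_injective (le_refl 2)
            (h.trans (by norm_num : (4:ℕ) = 2^2))))]
        norm_num),
      corrB B hB (2^2) (by norm_num)]
    norm_num
    field_simp
    ring
  · rw [hσ, hm, hs2,
      Finset.sum_eq_single_of_mem 1 (Finset.mem_Icc.2 (by omega)) (fun b hb hb2 => by
        have hb1 : 1 ≤ b := (Finset.mem_Icc.1 hb).1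
        rw [corrB B hB (4^b) (by calc (2:ℕ) ≤ 4^1 := by norm_num
              _ ≤ 4^b := Nat.pow_le_pow_right (by norm_num) hb1),
          if_neg (fun h : 4^b = 4 => hb2 (Nat.pow_right_injective (by norm_num)
            (h.trans (by norm_num : (4:ℕ) = 4^1))))]
        norm_num),
      corrB B hB (4^1) (by norm_num)]
    norm_num
    field_simp
    ring
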